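/- Let Γ = (P, L, I) be a finite weak generalized hexagon of order (s,t) and let Γ' = (P', L') be a subhexagon of Γ of order (k,t) (same second parameter t, i.e., an ideal subhexagon). If k^2 · t = s, then every line of Γ either belongs to L' or shares an incident point of Γ with some line of L'. -/

import Mathlib

/-- The incidence graph of a point-line geometry. -/
def IncidenceGraph {P L : Type*} (I : P → L → Prop) : SimpleGraph (P ⊕ L) where
  Adj x y :=
    (∃ p l, x = Sum.inl p ∧ y = Sum.inr l ∧ I p l) ∨
    (∃ p l, x = Sum.inr l ∧ y = Sum.inl p ∧ I p l)
  symm := by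
    refine ⟨?_⟩
    rintro x y (⟨p, l, hx, hy, h⟩ | ⟨p, l, hx, hy, h⟩)
    · exact Or.inr ⟨p, l, hy, hx, h⟩
    · exact Or.inl ⟨p, l, hy, hx, h⟩
  loopless := by
    refine ⟨?_⟩
    rintro x (⟨p, l, hx, hy, h⟩ | ⟨p, l, hx, hy, h⟩) <;> subst hx <;> simp_all

/-- A finite weak generalized hexagon: the incidence graph is connected, has girth
exactly 12, and has all pairwise distances at most 6. -/
def IsWeakGenHexagon {P L : Type*} (I : P → L → Prop) : Prop :=
  (IncidenceGraph I).Connected ∧ (IncidenceGraph I).girth = 12 ∧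
    ∀ x y, (IncidenceGraph I).dist x y ≤ 6

/-- The geometry has order (s,t): every line is incident with exactly s+1 points
and every point with exactly t+1 lines. -/
def HasOrder {P L : Type*} (I : P → L → Prop) (s t : ℕ) : Prop :=
  (∀ l, {p | I p l}.ncard = s + 1) ∧ (∀ p, {l | I p l}.ncard = t + 1)


open SimpleGraph Sum

namespace Hexa

variable {P L : Type*} {I : P → L → Prop}

lemma adj_pl {p : P} {l : L} (h : I p l) : (IncidenceGraph I).Adj (inl p) (inr l) :=
  Or.inl ⟨p, l, rfl, rfl, h⟩

lemma adj_lp {p : P} {l : L} (h : I p l) : (IncidenceGraph I).Adj (inr l) (inl p) :=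
  Or.inr ⟨p, l, rfl, rfl, h⟩

lemma adj_inl_elim {p : P} {z : P ⊕ L} (h : (IncidenceGraph I).Adj (inl p) z) :
    ∃ l, z = inr l ∧ I p l := by
  rcases h with ⟨p', l', hx, hy, hI⟩ | ⟨p', l', hx, hy, hI⟩
  · rw [inl.injEq] at hx; subst hx; exact ⟨l', hy, hI⟩
  · exact absurd hx (by simp)

lemma adj_inr_elim {l : L} {z : P ⊕ L} (h : (IncidenceGraph I).Adj (inr l) z) :
    ∃ p, z = inl p ∧ I p l := by
  rcases h with ⟨p', l', hx, hy, hI⟩ | ⟨p', l', hx, hy, hI⟩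
  · exact absurd hx (by simp)
  · rw [inr.injEq] at hx; subst hx; exact ⟨p', hy, hI⟩

lemma walk_parity {x y : P ⊕ L} (w : (IncidenceGraph I).Walk x y) :
    Even w.length ↔ (x.isLeft = y.isLeft) := by
  induction w with
  | nil => simp
  | @cons a b c h w ih =>
    rw [Walk.length_cons]
    rcases h with ⟨p, l, hx, hz, hI⟩ | ⟨p, l, hx, hz, hI⟩ <;> subst hx <;> subst hz <;>
      cases hy : c.isLeft <;>
      simp_all [Nat.even_add_one, Walk.length_cons]

lemma glue_cycle {V : Type*} {G : SimpleGraph V} {u v : V} (hne : u ≠ v)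
    (p q : G.Walk u v) (hp : p.IsPath) (hq : q.IsPath)
    (hdisj : ∀ x ∈ p.support, x ∈ q.support → x = u ∨ x = v)
    (hedge : ∀ e ∈ p.edges, e ∉ q.edges) :
    (p.append q.reverse).IsCycle := by
  have hpn : p.support.Nodup := hp.support_nodup
  have hqr : q.reverse.IsPath := hq.reverse
  have hqn : q.reverse.support.Nodup := hqr.support_nodup
  have hptail : p.support.tail.Nodup := by
    have := hpn; rw [p.support_eq_cons, List.nodup_cons] at this; exact this.2
  have hqtail : q.reverse.support.tail.Nodup := by
    have := hqn; rw [q.reverse.support_eq_cons, List.nodup_cons] at this; exact this.2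
  have hunotp : u ∉ p.support.tail := by
    have := hpn; rw [p.support_eq_cons, List.nodup_cons] at this; exact this.1
  have hvnotq : v ∉ q.reverse.support.tail := by
    have := hqn; rw [q.reverse.support_eq_cons, List.nodup_cons] at this; exact this.1
  refine ⟨⟨⟨?_⟩, ?_⟩, ?_⟩
  · rw [Walk.edges_append, Walk.edges_reverse]
    refine List.Nodup.append hp.edges_nodup (List.nodup_reverse.2 hq.edges_nodup) ?_
    intro e he he'
    exact hedge e he (List.mem_reverse.1 he')
  · intro hnil
    have hlen : (p.append q.reverse).length = 0 := by rw [hnil]; rfl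
    rw [Walk.length_append] at hlen
    exact hne (Walk.eq_of_length_eq_zero (p := p) (by omega))
  · rw [Walk.tail_support_append]
    refine List.Nodup.append hptail hqtail ?_
    intro x hx1 hx2
    have hx1' : x ∈ p.support := List.mem_of_mem_tail hx1
    have hx2' : x ∈ q.support := by
      have : x ∈ q.reverse.support := List.mem_of_mem_tail hx2
      rwa [Walk.support_reverse, List.mem_reverse] at this
    rcases hdisj x hx1' hx2' with rfl | rfl
    · exact hunotp hx1
    · exact hvnotq hx2

lemma no_short_cycle {V : Type*} {G : SimpleGraph V} (hg : G.girth = 12)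
    {u : V} {c : G.Walk u u} (hc : c.IsCycle) (hlen : c.length ≤ 10) : False := by
  have h1 : G.egirth ≤ (c.length : ℕ∞) := by
    refine iInf_le_of_le u (iInf_le_of_le c ?_)
    exact iInf_le (fun _ => (c.length : ℕ∞)) hc
  have h2 : G.girth ≤ c.length := by
    have := ENat.toNat_le_toNat h1 (by simp)
    simpa [SimpleGraph.girth] using this
  omega

lemma noDigon (hg : (IncidenceGraph I).girth = 12) {p q : P} {a b : L}
    (hpq : p ≠ q) (hab : a ≠ b)
    (h1 : I p a) (h2 : I q a) (h3 : I p b) (h4 : I q b) : False := by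
  let c : (IncidenceGraph I).Walk (inl p) (inl p) :=
    .cons (adj_pl h1) (.cons (adj_lp h2) (.cons (adj_pl h4) (.cons (adj_lp h3) .nil)))
  refine no_short_cycle hg (c := c) ?_ (by simp [c])
  constructor
  constructor
  constructor
  · show c.edges.Nodup
    simp [c, Sym2.eq, Sym2.rel_iff', hpq, hab, hpq.symm, hab.symm]
  · simp [c]
  · show c.support.tail.Nodup
    simp [c, hpq, hab, hpq.symm, hab.symm]

lemma noTriangle (hg : (IncidenceGraph I).girth = 12) {p q r : P} {a b c : L}
    (hpq : p ≠ q) (hqr : q ≠ r) (hpr : p ≠ r)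
    (hab : a ≠ b) (hbc : b ≠ c) (hac : a ≠ c)
    (h1 : I p a) (h2 : I p b) (h3 : I q b) (h4 : I q c) (h5 : I r c) (h6 : I r a) : False := by
  let w : (IncidenceGraph I).Walk (inl p) (inl p) :=
    .cons (adj_pl h2) (.cons (adj_lp h3) (.cons (adj_pl h4) (.cons (adj_lp h5)
      (.cons (adj_pl h6) (.cons (adj_lp h1) .nil)))))
  refine no_short_cycle hg (c := w) ?_ (by simp [w])
  refine ⟨⟨⟨?_⟩, by simp [w]⟩, ?_⟩
  · show w.edges.Nodup
    simp [w, Sym2.eq, Sym2.rel_iff', hpq, hqr, hpr, hab, hbc, hac,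
      hpq.symm, hqr.symm, hpr.symm, hab.symm, hbc.symm, hac.symm]
  · show w.support.tail.Nodup
    simp [w, hpq, hqr, hpr, hab, hbc, hac, hpq.symm, hqr.symm, hpr.symm,
      hab.symm, hbc.symm, hac.symm]

lemma noQuad (hg : (IncidenceGraph I).girth = 12) {p q r s : P} {a b c d : L}
    (hpq : p ≠ q) (hpr : p ≠ r) (hps : p ≠ s) (hqr : q ≠ r) (hqs : q ≠ s) (hrs : r ≠ s)
    (hab : a ≠ b) (hac : a ≠ c) (had : a ≠ d) (hbc : b ≠ c) (hbd : b ≠ d) (hcd : c ≠ d)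
    (h1 : I p a) (h2 : I p b) (h3 : I q b) (h4 : I q c) (h5 : I r c) (h6 : I r d)
    (h7 : I s d) (h8 : I s a) : False := by
  let w : (IncidenceGraph I).Walk (inl p) (inl p) :=
    .cons (adj_pl h2) (.cons (adj_lp h3) (.cons (adj_pl h4) (.cons (adj_lp h5)
      (.cons (adj_pl h6) (.cons (adj_lp h7) (.cons (adj_pl h8) (.cons (adj_lp h1) .nil)))))))
  refine no_short_cycle hg (c := w) ?_ (by simp [w])
  refine ⟨⟨⟨?_⟩, by simp [w]⟩, ?_⟩
  · show w.edges.Nodup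
    simp [w, Sym2.eq, Sym2.rel_iff', hpq, hpr, hps, hqr, hqs, hrs,
      hab, hac, had, hbc, hbd, hcd, hpq.symm, hpr.symm, hps.symm, hqr.symm, hqs.symm, hrs.symm,
      hab.symm, hac.symm, had.symm, hbc.symm, hbd.symm, hcd.symm]
  · show w.support.tail.Nodup
    simp [w, hpq, hpr, hps, hqr, hqs, hrs, hab, hac, had, hbc, hbd, hcd,
      hpq.symm, hpr.symm, hps.symm, hqr.symm, hqs.symm, hrs.symm,
      hab.symm, hac.symm, had.symm, hbc.symm, hbd.symm, hcd.symm]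

lemma noPent (hg : (IncidenceGraph I).girth = 12) {p q r s u : P} {a b c d e : L}
    (hpq : p ≠ q) (hpr : p ≠ r) (hps : p ≠ s) (hpu : p ≠ u)
    (hqr : q ≠ r) (hqs : q ≠ s) (hqu : q ≠ u) (hrs : r ≠ s) (hru : r ≠ u) (hsu : s ≠ u)
    (hab : a ≠ b) (hac : a ≠ c) (had : a ≠ d) (hae : a ≠ e)
    (hbc : b ≠ c) (hbd : b ≠ d) (hbe : b ≠ e) (hcd : c ≠ d) (hce : c ≠ e) (hde : d ≠ e)
    (h1 : I p a) (h2 : I p b) (h3 : I q b) (h4 : I q c) (h5 : I r c) (h6 : I r d)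
    (h7 : I s d) (h8 : I s e) (h9 : I u e) (h10 : I u a) : False := by
  let w : (IncidenceGraph I).Walk (inl p) (inl p) :=
    .cons (adj_pl h2) (.cons (adj_lp h3) (.cons (adj_pl h4) (.cons (adj_lp h5)
      (.cons (adj_pl h6) (.cons (adj_lp h7) (.cons (adj_pl h8) (.cons (adj_lp h9)
      (.cons (adj_pl h10) (.cons (adj_lp h1) .nil)))))))))
  refine no_short_cycle hg (c := w) ?_ (by simp [w])
  refine ⟨⟨⟨?_⟩, by simp [w]⟩, ?_⟩
  · show w.edges.Nodup
    simp [w, Sym2.eq, Sym2.rel_iff', hpq, hpr, hps, hpu, hqr, hqs, hqu, hrs, hru, hsu,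
      hab, hac, had, hae, hbc, hbd, hbe, hcd, hce, hde,
      hpq.symm, hpr.symm, hps.symm, hpu.symm, hqr.symm, hqs.symm, hqu.symm, hrs.symm, hru.symm,
      hsu.symm, hab.symm, hac.symm, had.symm, hae.symm, hbc.symm, hbd.symm, hbe.symm, hcd.symm,
      hce.symm, hde.symm]
  · show w.support.tail.Nodup
    simp [w, hpq, hpr, hps, hpu, hqr, hqs, hqu, hrs, hru, hsu,
      hab, hac, had, hae, hbc, hbd, hbe, hcd, hce, hde,
      hpq.symm, hpr.symm, hps.symm, hpu.symm, hqr.symm, hqs.symm, hqu.symm, hrs.symm, hru.symm,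
      hsu.symm, hab.symm, hac.symm, had.symm, hae.symm, hbc.symm, hbd.symm, hbe.symm, hcd.symm,
      hce.symm, hde.symm]

variable {Q M : Type*} {J : Q → M → Prop}

lemma subtype_card_of_ncard {α : Type*} {s : Set α} {n : ℕ}
    (h : s.ncard = n) : Nat.card {x // x ∈ s} = n := by
  rw [Nat.card_coe_set_eq, h]

lemma card_lines_through [Fintype M] {t : ℕ} (hpts : ∀ q, {m | J q m}.ncard = t + 1)
    {p : Q} {m₀ : M} (hpl : J p m₀) :
    Nat.card {m : M // J p m ∧ m ≠ m₀} = t := by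
  have hset : {m : M | J p m ∧ m ≠ m₀} = {m : M | J p m} \ {m₀} := by
    ext x; simp [and_comm]
  have h2 : ({m : M | J p m} \ {m₀}).ncard = t := by
    rw [Set.ncard_diff_singleton_of_mem (show m₀ ∈ {m : M | J p m} from hpl), hpts p]
    omega
  have h3 : {m : M | J p m ∧ m ≠ m₀}.ncard = t := by rw [hset]; exact h2
  exact subtype_card_of_ncard (s := {m : M | J p m ∧ m ≠ m₀}) h3

lemma card_pts_on [Fintype Q] {k : ℕ} (hlines : ∀ m, {q | J q m}.ncard = k + 1)
    {p : Q} {m₀ : M} (hpl : J p m₀) :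
    Nat.card {q : Q // J q m₀ ∧ q ≠ p} = k := by
  have hset : {q : Q | J q m₀ ∧ q ≠ p} = {q : Q | J q m₀} \ {p} := by
    ext x; simp [and_comm]
  have h2 : ({q : Q | J q m₀} \ {p}).ncard = k := by
    rw [Set.ncard_diff_singleton_of_mem (show p ∈ {q : Q | J q m₀} from hpl), hlines m₀]
    omega
  have h3 : {q : Q | J q m₀ ∧ q ≠ p}.ncard = k := by rw [hset]; exact h2
  exact subtype_card_of_ncard (s := {q : Q | J q m₀ ∧ q ≠ p}) h3

abbrev Lv1 {Q M : Type*} (J : Q → M → Prop) (l₀ : M) : Type _ :=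
  Σ pp : {x : Q // J x l₀}, Σ mm : {m : M // J pp.1 m ∧ m ≠ l₀}, {x : Q // J x mm.1 ∧ x ≠ pp.1}

abbrev Lv2 {Q M : Type*} (J : Q → M → Prop) (l₀ : M) : Type _ :=
  Σ zz : Lv1 J l₀, Σ nn : {n : M // J zz.2.2.1 n ∧ n ≠ zz.2.1.1},
    {x : Q // J x nn.1 ∧ x ≠ zz.2.2.1}

lemma card_points_lower {Q M : Type*} [Fintype Q] [Fintype M] {J : Q → M → Prop} {k t : ℕ}
    (hg : (IncidenceGraph J).girth = 12)
    (hne : Nonempty (Q ⊕ M))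
    (hlines : ∀ m, {q | J q m}.ncard = k + 1)
    (hpts : ∀ q, {m | J q m}.ncard = t + 1) :
    (k + 1) * (1 + t * k + t * k * (t * k)) ≤ Fintype.card Q := by
  classical
  obtain ⟨l₀⟩ : Nonempty M := by
    rcases hne with ⟨q | m⟩
    · have h := hpts q
      have hne2 : {m | J q m}.Nonempty := by
        apply Set.nonempty_of_ncard_ne_zero; omega
      exact ⟨hne2.choose⟩
    · exact ⟨m⟩
  -- helper geometric facts
  have hlv1 : ∀ {p m q : _}, J p l₀ → J p m → m ≠ l₀ → J q m → q ≠ p → ¬ J q l₀ := by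
    intro p m q h1 h2 h3 h4 h5 h6
    exact noDigon hg h5 h3 h4 h2 h6 h1
  have huniq1 : ∀ {p₁ m₁ p₂ m₂ q : _}, J p₁ l₀ → J p₁ m₁ → m₁ ≠ l₀ → J q m₁ → q ≠ p₁ →
      J p₂ l₀ → J p₂ m₂ → m₂ ≠ l₀ → J q m₂ → q ≠ p₂ → p₁ = p₂ ∧ m₁ = m₂ := by
    intro p₁ m₁ p₂ m₂ q a1 a2 a3 a4 a5 b1 b2 b3 b4 b5
    have hm : m₁ = m₂ := by
      by_contra hmm
      by_cases hpp : p₁ = p₂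
      · subst hpp; exact noDigon hg a5 hmm a4 a2 b4 b2
      · exact noTriangle hg (Ne.symm a5) b5 hpp (Ne.symm a3) hmm (Ne.symm b3)
          a1 a2 a4 b4 b2 b1
    subst hm
    have hp : p₁ = p₂ := by
      by_contra hpp
      exact noDigon hg hpp (Ne.symm a3) a1 b1 a2 b2
    exact ⟨hp, rfl⟩
  have hlv2 : ∀ {p m q n r : _}, J p l₀ → J p m → m ≠ l₀ → J q m → q ≠ p →
      J q n → n ≠ m → J r n → r ≠ q → ¬ J r l₀ := by
    intro p m q n r a1 a2 a3 a4 a5 a6 a7 a8 a9 hr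
    have hq0 : ¬ J q l₀ := hlv1 a1 a2 a3 a4 a5
    have hn0 : n ≠ l₀ := fun h => hq0 (h ▸ a6)
    have hpr : p ≠ r := by
      rintro rfl
      exact noDigon hg (Ne.symm a5) (Ne.symm a7) a2 a4 a8 a6
    exact noTriangle hg (Ne.symm a5) (Ne.symm a9) hpr (Ne.symm a3) (Ne.symm a7) (Ne.symm hn0)
      a1 a2 a4 a6 a8 hr
  -- two distinct level-1 points cannot lie on a common new line
  have hcommon : ∀ {p₁ m₁ q₁ p₂ m₂ q₂ n : _}, J p₁ l₀ → J p₁ m₁ → m₁ ≠ l₀ → J q₁ m₁ → q₁ ≠ p₁ →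
      J p₂ l₀ → J p₂ m₂ → m₂ ≠ l₀ → J q₂ m₂ → q₂ ≠ p₂ →
      J q₁ n → n ≠ m₁ → J q₂ n → n ≠ m₂ → q₁ = q₂ := by
    intro p₁ m₁ q₁ p₂ m₂ q₂ n a1 a2 a3 a4 a5 b1 b2 b3 b4 b5 c1 c2 c3 c4
    by_contra hqq
    have hq10 : ¬ J q₁ l₀ := hlv1 a1 a2 a3 a4 a5
    have hq20 : ¬ J q₂ l₀ := hlv1 b1 b2 b3 b4 b5
    by_cases hmm : m₁ = m₂
    · subst hmm
      exact noDigon hg hqq (Ne.symm c2) a4 b4 c1 c3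
    · by_cases hpp : p₁ = p₂
      · subst hpp
        exact noTriangle hg hqq b5 a5 (Ne.symm c2) c4 hmm a4 c1 c3 b4 b2 a2
      · exact noQuad hg (Ne.symm a5) (fun h => hq20 (by rw [← h]; exact a1)) hpp hqq
          (fun h => hq10 (by rw [h]; exact b1)) b5
          (Ne.symm a3) (fun h => hq10 (by rw [← h] at c1; exact c1)) (Ne.symm b3)
          (Ne.symm c2) hmm c4
          a1 a2 a4 c1 c3 b4 b2 b1
  -- a level-2 point is not a level-1 point
  have ht21 : ∀ {p₁ m₁ q₁ n₁ r p₂ m₂ : _}, J p₁ l₀ → J p₁ m₁ → m₁ ≠ l₀ → J q₁ m₁ → q₁ ≠ p₁ →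
      J q₁ n₁ → n₁ ≠ m₁ → J r n₁ → r ≠ q₁ →
      J p₂ l₀ → J p₂ m₂ → m₂ ≠ l₀ → J r m₂ → r ≠ p₂ → False := by
    intro p₁ m₁ q₁ n₁ r p₂ m₂ a1 a2 a3 a4 a5 a6 a7 a8 a9 b1 b2 b3 b4 b5
    have hq10 : ¬ J q₁ l₀ := hlv1 a1 a2 a3 a4 a5
    have hr0 : ¬ J r l₀ := hlv2 a1 a2 a3 a4 a5 a6 a7 a8 a9
    by_cases hnm : n₁ = m₂
    · have hq1p2 : q₁ ≠ p₂ := fun h => hq10 (by rw [h]; exact b1)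
      have hq1m2 : J q₁ m₂ := by rw [← hnm]; exact a6
      have := huniq1 a1 a2 a3 a4 a5 b1 b2 b3 hq1m2 hq1p2
      exact a7 (by rw [this.2, hnm])
    · by_cases hmm : m₁ = m₂
      · subst hmm
        exact noDigon hg a9 (Ne.symm a7) b4 a4 a8 a6
      · by_cases hpp : p₁ = p₂
        · subst hpp
          exact noTriangle hg (Ne.symm a5) (Ne.symm a9) (fun h => hr0 (by rw [← h]; exact a1))
            (Ne.symm hmm) (Ne.symm a7) (Ne.symm hnm) b2 a2 a4 a6 a8 b4
        · exact noQuad hg (Ne.symm a5) (fun h => hr0 (by rw [← h]; exact a1)) hpp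
            (Ne.symm a9) (fun h => hq10 (by rw [h]; exact b1)) b5
            (Ne.symm a3) (fun h => hq10 (by rw [← h] at a6; exact a6)) (Ne.symm b3)
            (Ne.symm a7) hmm hnm
            a1 a2 a4 a6 a8 b4 b2 b1
  -- two level-2 branches reaching the same point share the last line
  have ht22 : ∀ {p₁ m₁ q₁ n₁ p₂ m₂ q₂ n₂ r : _},
      J p₁ l₀ → J p₁ m₁ → m₁ ≠ l₀ → J q₁ m₁ → q₁ ≠ p₁ → J q₁ n₁ → n₁ ≠ m₁ → J r n₁ → r ≠ q₁ →
      J p₂ l₀ → J p₂ m₂ → m₂ ≠ l₀ → J q₂ m₂ → q₂ ≠ p₂ → J q₂ n₂ → n₂ ≠ m₂ → J r n₂ → r ≠ q₂ →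
      n₁ = n₂ := by
    intro p₁ m₁ q₁ n₁ p₂ m₂ q₂ n₂ r a1 a2 a3 a4 a5 a6 a7 a8 a9 b1 b2 b3 b4 b5 b6 b7 b8 b9
    by_contra hnn
    have hq10 : ¬ J q₁ l₀ := hlv1 a1 a2 a3 a4 a5
    have hq20 : ¬ J q₂ l₀ := hlv1 b1 b2 b3 b4 b5
    have hr0 : ¬ J r l₀ := hlv2 a1 a2 a3 a4 a5 a6 a7 a8 a9
    by_cases hqq : q₁ = q₂
    · subst hqq
      exact noDigon hg (Ne.symm a9) hnn a6 a8 b6 b8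
    · have hn1m2 : n₁ ≠ m₂ := by
        rintro rfl
        exact noDigon hg b9 (Ne.symm b7) a8 b4 b8 b6
      have hn2m1 : n₂ ≠ m₁ := by
        rintro rfl
        exact noDigon hg a9 (Ne.symm a7) b8 a4 a8 a6
      by_cases hmm : m₁ = m₂
      · subst hmm
        exact noTriangle hg (Ne.symm a9) b9 hqq (Ne.symm a7) hnn (Ne.symm hn2m1)
          a4 a6 a8 b8 b6 b4
      · by_cases hpp : p₁ = p₂
        · subst hpp
          exact noQuad hg (Ne.symm a9) hqq a5 b9 (fun h => hr0 (by rw [h]; exact a1)) b5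
            (Ne.symm a7) (Ne.symm hn2m1) hmm hnn hn1m2 b7
            a4 a6 a8 b8 b6 b4 b2 a2
        · exact noPent hg (Ne.symm a5) (fun h => hr0 (by rw [← h]; exact a1))
            (fun h => hq20 (by rw [← h]; exact a1)) hpp
            (Ne.symm a9) hqq (fun h => hq10 (by rw [h]; exact b1))
            b9 (fun h => hr0 (by rw [h]; exact b1)) b5
            (Ne.symm a3) (fun h => hq10 (by rw [← h] at a6; exact a6))
            (fun h => hq20 (by rw [← h] at b6; exact b6)) (Ne.symm b3)
            (Ne.symm a7) (Ne.symm hn2m1) hmm hnn hn1m2 b7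
            a1 a2 a4 a6 a8 b8 b6 b4 b2 b1
  -- the injection
  let f : ({x : Q // J x l₀} ⊕ Lv1 J l₀ ⊕ Lv2 J l₀) → Q := fun x =>
    match x with
    | .inl a => a.1
    | .inr (.inl z) => z.2.2.1
    | .inr (.inr w) => w.2.2.1
  have hinj : Function.Injective f := by
    rintro (⟨a, ha⟩ | (⟨⟨p₁, hp₁⟩, ⟨m₁, hm₁⟩, ⟨q₁, hq₁⟩⟩ |
        ⟨⟨⟨p₁, hp₁⟩, ⟨m₁, hm₁⟩, ⟨q₁, hq₁⟩⟩, ⟨n₁, hn₁⟩, ⟨r₁, hr₁⟩⟩))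
      (⟨b, hb⟩ | (⟨⟨p₂, hp₂⟩, ⟨m₂, hm₂⟩, ⟨q₂, hq₂⟩⟩ |
        ⟨⟨⟨p₂, hp₂⟩, ⟨m₂, hm₂⟩, ⟨q₂, hq₂⟩⟩, ⟨n₂, hn₂⟩, ⟨r₂, hr₂⟩⟩)) h <;>
      simp only [f] at h
    · subst h; rfl
    · exact absurd (h ▸ ha) (hlv1 hp₂ hm₂.1 hm₂.2 hq₂.1 hq₂.2)
    · exact absurd (h ▸ ha) (hlv2 hp₂ hm₂.1 hm₂.2 hq₂.1 hq₂.2 hn₂.1 hn₂.2 hr₂.1 hr₂.2)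
    · exact absurd (h ▸ hb) (hlv1 hp₁ hm₁.1 hm₁.2 hq₁.1 hq₁.2)
    · subst h
      obtain ⟨hpe, hme⟩ := huniq1 hp₁ hm₁.1 hm₁.2 hq₁.1 hq₁.2 hp₂ hm₂.1 hm₂.2 hq₂.1 hq₂.2
      subst hpe; subst hme; rfl
    · subst h
      exact (ht21 hp₂ hm₂.1 hm₂.2 hq₂.1 hq₂.2 hn₂.1 hn₂.2 hr₂.1 hr₂.2
        hp₁ hm₁.1 hm₁.2 hq₁.1 hq₁.2).elim
    · exact absurd (h ▸ hb) (hlv2 hp₁ hm₁.1 hm₁.2 hq₁.1 hq₁.2 hn₁.1 hn₁.2 hr₁.1 hr₁.2)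
    · subst h
      exact (ht21 hp₁ hm₁.1 hm₁.2 hq₁.1 hq₁.2 hn₁.1 hn₁.2 hr₁.1 hr₁.2
        hp₂ hm₂.1 hm₂.2 hq₂.1 hq₂.2).elim
    · subst h
      have hne : n₁ = n₂ := ht22 hp₁ hm₁.1 hm₁.2 hq₁.1 hq₁.2 hn₁.1 hn₁.2 hr₁.1 hr₁.2
        hp₂ hm₂.1 hm₂.2 hq₂.1 hq₂.2 hn₂.1 hn₂.2 hr₂.1 hr₂.2
      subst hne
      have hqe : q₁ = q₂ := hcommon hp₁ hm₁.1 hm₁.2 hq₁.1 hq₁.2 hp₂ hm₂.1 hm₂.2 hq₂.1 hq₂.2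
        hn₁.1 hn₁.2 hn₂.1 hn₂.2
      subst hqe
      obtain ⟨hpe, hme⟩ := huniq1 hp₁ hm₁.1 hm₁.2 hq₁.1 hq₁.2 hp₂ hm₂.1 hm₂.2 hq₂.1 hq₂.2
      subst hpe; subst hme; rfl
  have hcard := Fintype.card_le_of_injective f hinj
  rw [Fintype.card_sum, Fintype.card_sum] at hcard
  have c0 : Fintype.card {x : Q // J x l₀} = k + 1 := by
    rw [← Nat.card_eq_fintype_card]
    exact subtype_card_of_ncard (s := {q : Q | J q l₀}) (hlines l₀)
  have cf1 : ∀ (p : Q) (m₀ : M), J p m₀ → Fintype.card {m : M // J p m ∧ m ≠ m₀} = t :=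
    fun p m₀ h => by rw [← Nat.card_eq_fintype_card]; exact card_lines_through hpts h
  have cf2 : ∀ (p : Q) (m₀ : M), J p m₀ → Fintype.card {x : Q // J x m₀ ∧ x ≠ p} = k :=
    fun p m₀ h => by rw [← Nat.card_eq_fintype_card]; exact card_pts_on hlines h
  have c1 : Fintype.card (Lv1 J l₀) = (k + 1) * (t * k) := by
    rw [Fintype.card_sigma]
    have hterm : ∀ pp : {x : Q // J x l₀},
        Fintype.card (Σ mm : {m : M // J pp.1 m ∧ m ≠ l₀}, {x : Q // J x mm.1 ∧ x ≠ pp.1})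
          = t * k := by
      intro pp
      rw [Fintype.card_sigma]
      have hin : ∀ mm : {m : M // J pp.1 m ∧ m ≠ l₀},
          Fintype.card {x : Q // J x mm.1 ∧ x ≠ pp.1} = k :=
        fun mm => cf2 pp.1 mm.1 mm.2.1
      simp only [hin, Finset.sum_const, Finset.card_univ, smul_eq_mul, cf1 pp.1 l₀ pp.2]
    simp only [hterm, Finset.sum_const, Finset.card_univ, smul_eq_mul, c0]
  have c2 : Fintype.card (Lv2 J l₀) = (k + 1) * (t * k) * (t * k) := by
    rw [Fintype.card_sigma]
    have hterm : ∀ zz : Lv1 J l₀,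
        Fintype.card (Σ nn : {n : M // J zz.2.2.1 n ∧ n ≠ zz.2.1.1},
          {x : Q // J x nn.1 ∧ x ≠ zz.2.2.1}) = t * k := by
      intro zz
      rw [Fintype.card_sigma]
      have hin : ∀ nn : {n : M // J zz.2.2.1 n ∧ n ≠ zz.2.1.1},
          Fintype.card {x : Q // J x nn.1 ∧ x ≠ zz.2.2.1} = k :=
        fun nn => cf2 zz.2.2.1 nn.1 nn.2.1
      simp only [hin, Finset.sum_const, Finset.card_univ, smul_eq_mul,
        cf1 zz.2.2.1 zz.2.1.1 zz.2.2.2.1]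
    simp only [hterm, Finset.sum_const, Finset.card_univ, smul_eq_mul, c1]
  rw [c0, c1, c2] at hcard
  calc (k + 1) * (1 + t * k + t * k * (t * k))
      = k + 1 + ((k + 1) * (t * k) + (k + 1) * (t * k) * (t * k)) := by ring
    _ ≤ Fintype.card Q := hcard

end Hexa


/-- If Γ' = (P', L') is an ideal subhexagon of order (k,t) of a
finite weak generalized hexagon Γ of order (s,t) and k²·t = s, then every line of
Γ either belongs to L' or shares an incident point with some line of L'. -/
theorem ideal_subhexagon_blocks_lines
    {P L : Type} [Fintype P] [Fintype L] (I : P → L → Prop) (s t k : ℕ)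
    (hs : 1 ≤ s) (ht : 1 ≤ t) (hk : 1 ≤ k)
    (hΓ : IsWeakGenHexagon I) (hord : HasOrder I s t)
    (P' : Set P) (L' : Set L)
    (hΓ' : IsWeakGenHexagon (fun (p : P') (l : L') => I p.1 l.1))
    (hord' : HasOrder (fun (p : P') (l : L') => I p.1 l.1) k t)
    (hkt : k ^ 2 * t = s) :
    ∀ l : L, l ∈ L' ∨ ∃ m ∈ L', ∃ p : P, I p l ∧ I p m := by
  classical
  intro l
  by_contra hcon
  push_neg at hcon
  obtain ⟨hl1, hl2⟩ := hcon
  -- every line of Γ through a point of P' belongs to L' (ideality)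
  have ideal : ∀ p, p ∈ P' → ∀ m : L, I p m → m ∈ L' := by
    intro p hp m hm
    have h1 : {l : L | I p l}.ncard = t + 1 := hord.2 p
    have h2 : {ll : L' | I p ll.1}.ncard = t + 1 := hord'.2 ⟨p, hp⟩
    have himg : (Subtype.val '' {ll : L' | I p ll.1}) ⊆ {l : L | I p l} := by
      rintro _ ⟨x, hx, rfl⟩; exact hx
    have hcardimg : (Subtype.val '' {ll : L' | I p ll.1}).ncard = t + 1 := by
      rw [Set.ncard_image_of_injective _ Subtype.val_injective]; exact h2
    have heq : Subtype.val '' {ll : L' | I p ll.1} = {l : L | I p l} :=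
      Set.eq_of_subset_of_ncard_le himg (by rw [h1, hcardimg]) (Set.toFinite _)
    have hm' : m ∈ Subtype.val '' {ll : L' | I p ll.1} := by rw [heq]; exact hm
    obtain ⟨x, -, rfl⟩ := hm'
    exact x.2
  have hmeet : ∀ m ∈ L', ∀ x : P, I x l → I x m → False :=
    fun m hm x h1 h2 => hl2 m hm x h1 h2
  -- each point of P' is at distance exactly 5 from l in the incidence graph
  have hdist5 : ∀ p, p ∈ P' → (IncidenceGraph I).dist (inl p) (inr l) = 5 := by
    intro p hp
    have hreach : (IncidenceGraph I).Reachable (inl p) (inr l) := hΓ.1.preconnected _ _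
    obtain ⟨w, hw⟩ := hreach.exists_walk_length_eq_dist
    have hle : (IncidenceGraph I).dist (inl p) (inr l) ≤ 6 := hΓ.2.2 _ _
    have hodd : ¬ Even ((IncidenceGraph I).dist (inl p) (inr l)) := by
      rw [← hw]
      intro hev
      have := (Hexa.walk_parity w).1 hev
      simp at this
    have hne1 : (IncidenceGraph I).dist (inl p) (inr l) ≠ 1 := by
      intro h1
      rw [SimpleGraph.dist_eq_one_iff_adj] at h1
      obtain ⟨l2, hl2', hpl2⟩ := Hexa.adj_inl_elim h1
      rw [inr.injEq] at hl2'
      subst hl2'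
      exact hl1 (ideal p hp l hpl2)
    have hne3 : (IncidenceGraph I).dist (inl p) (inr l) ≠ 3 := by
      intro h3
      rw [h3] at hw
      cases w with
      | cons h1 w1 =>
        obtain ⟨m, rfl, hpm⟩ := Hexa.adj_inl_elim h1
        cases w1 with
        | nil => simp at hw
        | cons h2 w2 =>
          obtain ⟨x, rfl, hxm⟩ := Hexa.adj_inr_elim h2
          cases w2 with
          | cons h3' w3 =>
            obtain ⟨l2, rfl, hxl2⟩ := Hexa.adj_inl_elim h3'
            have h0 : w3.length = 0 := by simp only [Walk.length_cons] at hw; omega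
            have hl2e : l2 = l := by
              have := Walk.eq_of_length_eq_zero h0
              rwa [inr.injEq] at this
            rw [hl2e] at hxl2
            exact hmeet m (ideal p hp m hpm) x hxl2 hxm
    have : Odd ((IncidenceGraph I).dist (inl p) (inr l)) := Nat.not_even_iff_odd.1 hodd
    obtain ⟨c, hc⟩ := this
    omega
  -- choose, for every point of P', the second and third lines of a geodesic to l
  have key : ∀ p : P, ∃ mn : L × L, p ∈ P' → (mn.1 ∈ L' ∧ I p mn.1 ∧ mn.2 ∉ L' ∧ mn.2 ≠ l ∧
      (∃ x, I x mn.2 ∧ I x l) ∧ ∃ y, y ∉ P' ∧ I y mn.1 ∧ I y mn.2) := by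
    intro p
    by_cases hp : p ∈ P'
    · have hd := hdist5 p hp
      obtain ⟨w, hw⟩ := (hΓ.1.preconnected (inl p) (inr l)).exists_walk_length_eq_dist
      rw [hd] at hw
      cases w with
      | cons h1 w1 =>
        obtain ⟨m, rfl, hpm⟩ := Hexa.adj_inl_elim h1
        cases w1 with
        | nil => simp at hw
        | cons h2 w2 =>
          obtain ⟨y, rfl, hym⟩ := Hexa.adj_inr_elim h2
          cases w2 with
          | cons h3 w3 =>
            obtain ⟨n, rfl, hyn⟩ := Hexa.adj_inl_elim h3
            cases w3 with
            | nil => simp at hw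
            | cons h4 w4 =>
              obtain ⟨x, rfl, hxn⟩ := Hexa.adj_inr_elim h4
              cases w4 with
              | cons h5 w5 =>
                obtain ⟨l2, rfl, hxl2⟩ := Hexa.adj_inl_elim h5
                have h0 : w5.length = 0 := by simp only [Walk.length_cons] at hw; omega
                have hl2e : l2 = l := by
                  have := Walk.eq_of_length_eq_zero h0
                  rwa [inr.injEq] at this
                rw [hl2e] at hxl2
                have hmL : m ∈ L' := ideal p hp m hpm
                have hnL : n ∉ L' := fun h => hmeet n h x hxl2 hxn
                have hnl : n ≠ l := by
                  rintro rfl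
                  exact hmeet m hmL y hyn hym
                have hyP : y ∉ P' := fun h => hnL (ideal y h n hyn)
                exact ⟨(m, n), fun _ => ⟨hmL, hpm, hnL, hnl, ⟨x, hxn, hxl2⟩, ⟨y, hyP, hym, hyn⟩⟩⟩
    · exact ⟨(l, l), fun h => absurd h hp⟩
  choose F hF using key
  -- two distinct lines of L' cannot both meet a common line outside Γ' in points outside P'
  have far : ∀ m₁ m₂ : L, m₁ ∈ L' → m₂ ∈ L' → m₁ ≠ m₂ → ∀ y₁ y₂ : P, y₁ ∉ P' → y₂ ∉ P' →
      ∀ n : L, n ∉ L' → I y₁ m₁ → I y₁ n → I y₂ m₂ → I y₂ n → False := by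
    intro m₁ m₂ hm₁ hm₂ hne y₁ y₂ hy₁ hy₂ n hn h11 h12 h21 h22
    -- the graph homomorphism from the incidence graph of Γ' to that of Γ
    let J' : P' → L' → Prop := fun p m => I p.1 m.1
    let Fm : (P' ⊕ L') → (P ⊕ L) := Sum.map Subtype.val Subtype.val
    have hFm : ∀ a b, (IncidenceGraph J').Adj a b → (IncidenceGraph I).Adj (Fm a) (Fm b) := by
      rintro a b (⟨pp, ll, rfl, rfl, hI⟩ | ⟨pp, ll, rfl, rfl, hI⟩)
      · exact Or.inl ⟨pp.1, ll.1, rfl, rfl, hI⟩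
      · exact Or.inr ⟨pp.1, ll.1, rfl, rfl, hI⟩
    let hom : IncidenceGraph J' →g IncidenceGraph I := ⟨Fm, fun h => hFm _ _ h⟩
    have hFminj : Function.Injective Fm := by
      rintro (a | a) (b | b) h
      · have hab : a.1 = b.1 := by simpa [Fm] using h
        rw [show a = b from Subtype.ext hab]
      · exact absurd h (by simp [Fm])
      · exact absurd h (by simp [Fm])
      · have hab : a.1 = b.1 := by simpa [Fm] using h
        rw [show a = b from Subtype.ext hab]
    -- a geodesic between the two lines inside Γ'
    obtain ⟨q', hq'path, hq'len⟩ :=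
      hΓ'.1.exists_path_of_dist (inr (⟨m₁, hm₁⟩ : L')) (inr (⟨m₂, hm₂⟩ : L'))
    have hq'le : q'.length ≤ 6 := by rw [hq'len]; exact hΓ'.2.2 _ _
    let q : (IncidenceGraph I).Walk (inr m₁) (inr m₂) := q'.map hom
    have hqpath : q.IsPath := Walk.map_isPath_of_injective hFminj hq'path
    have hqlen : q.length ≤ 6 := by
      have : q.length = q'.length := Walk.length_map _ _
      omega
    have hqsup : ∀ z ∈ q.support, (∃ pp : P', z = inl pp.1) ∨ (∃ ll : L', z = inr ll.1) := by
      intro z hz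
      have hz : z ∈ (q'.map hom).support := hz; rw [Walk.support_map, List.mem_map] at hz
      obtain ⟨zz, -, rfl⟩ := hz
      rcases zz with pp | ll
      · exact Or.inl ⟨pp, rfl⟩
      · exact Or.inr ⟨ll, rfl⟩
    have hqedge : ∀ e ∈ q.edges, ∀ z ∈ e, (∃ pp : P', z = inl pp.1) ∨ (∃ ll : L', z = inr ll.1) := by
      intro e he z hz
      have he : e ∈ (q'.map hom).edges := he; rw [Walk.edges_map, List.mem_map] at he
      obtain ⟨e', -, rfl⟩ := he
      obtain ⟨zz, -, rfl⟩ := Sym2.mem_map.1 hz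
      rcases zz with pp | ll
      · exact Or.inl ⟨pp, rfl⟩
      · exact Or.inr ⟨ll, rfl⟩
    have huv : (inr m₁ : P ⊕ L) ≠ inr m₂ := by simp [hne]
    have hm₁n : m₁ ≠ n := fun h => hn (h ▸ hm₁)
    have hm₂n : m₂ ≠ n := fun h => hn (h ▸ hm₂)
    -- the explicit short path through y₁, n, y₂
    by_cases hyy : y₁ = y₂
    · subst hyy
      let pex : (IncidenceGraph I).Walk (inr m₁) (inr m₂) :=
        .cons (Hexa.adj_lp h11) (.cons (Hexa.adj_pl h21) .nil)
      have hpexpath : pex.IsPath := by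
        constructor
        · constructor
          simp [pex, Sym2.eq, Sym2.rel_iff', hne, hne.symm]
        · simp [pex, hne]
      have hdisj : ∀ x ∈ pex.support, x ∈ q.support → x = inr m₁ ∨ x = inr m₂ := by
        intro x hx hxq
        have hxl : x = inr m₁ ∨ x = inl y₁ ∨ x = inr m₂ := by
          simpa [pex] using hx
        rcases hxl with rfl | rfl | rfl
        · exact Or.inl rfl
        · rcases hqsup _ hxq with ⟨pp, hpp⟩ | ⟨ll, hll⟩
          · rw [inl.injEq] at hpp; exact absurd (hpp ▸ pp.2) hy₁
          · exact absurd hll (by simp)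
        · exact Or.inr rfl
      have hedge : ∀ e ∈ pex.edges, e ∉ q.edges := by
        intro e he heq
        have hy1e : (inl y₁ : P ⊕ L) ∈ e := by
          have : e = s(inr m₁, inl y₁) ∨ e = s(inl y₁, inr m₂) := by simpa [pex] using he
          rcases this with rfl | rfl <;> simp
        rcases hqedge e heq _ hy1e with ⟨pp, hpp⟩ | ⟨ll, hll⟩
        · rw [inl.injEq] at hpp; exact absurd (hpp ▸ pp.2) hy₁
        · exact absurd hll (by simp)
      have hcyc := Hexa.glue_cycle huv pex q hpexpath hqpath hdisj hedge
      refine Hexa.no_short_cycle hΓ.2.1 hcyc ?_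
      rw [Walk.length_append, Walk.length_reverse]
      have : pex.length = 2 := by simp [pex]
      omega
    · let pex : (IncidenceGraph I).Walk (inr m₁) (inr m₂) :=
        .cons (Hexa.adj_lp h11) (.cons (Hexa.adj_pl h12) (.cons (Hexa.adj_lp h22)
          (.cons (Hexa.adj_pl h21) .nil)))
      have hpexpath : pex.IsPath := by
        constructor
        · constructor
          simp [pex, Sym2.eq, Sym2.rel_iff', hne, hne.symm, hyy, Ne.symm hyy,
            hm₁n, hm₂n, Ne.symm hm₁n, Ne.symm hm₂n]
        · simp [pex, hne, hyy, hm₁n, hm₂n, Ne.symm hm₁n, Ne.symm hm₂n]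
      have hdisj : ∀ x ∈ pex.support, x ∈ q.support → x = inr m₁ ∨ x = inr m₂ := by
        intro x hx hxq
        have hxl : x = inr m₁ ∨ x = inl y₁ ∨ x = inr n ∨ x = inl y₂ ∨ x = inr m₂ := by
          simpa [pex] using hx
        rcases hxl with rfl | rfl | rfl | rfl | rfl
        · exact Or.inl rfl
        · rcases hqsup _ hxq with ⟨pp, hpp⟩ | ⟨ll, hll⟩
          · rw [inl.injEq] at hpp; exact absurd (hpp ▸ pp.2) hy₁
          · exact absurd hll (by simp)
        · rcases hqsup _ hxq with ⟨pp, hpp⟩ | ⟨ll, hll⟩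
          · exact absurd hpp (by simp)
          · rw [inr.injEq] at hll; exact absurd (hll ▸ ll.2) hn
        · rcases hqsup _ hxq with ⟨pp, hpp⟩ | ⟨ll, hll⟩
          · rw [inl.injEq] at hpp; exact absurd (hpp ▸ pp.2) hy₂
          · exact absurd hll (by simp)
        · exact Or.inr rfl
      have hedge : ∀ e ∈ pex.edges, e ∉ q.edges := by
        intro e he heq
        have hye : (inl y₁ : P ⊕ L) ∈ e ∨ (inl y₂ : P ⊕ L) ∈ e := by
          have : e = s(inr m₁, inl y₁) ∨ e = s(inl y₁, inr n) ∨ e = s(inr n, inl y₂) ∨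
              e = s(inl y₂, inr m₂) := by simpa [pex] using he
          rcases this with rfl | rfl | rfl | rfl <;> simp
        rcases hye with hye | hye
        · rcases hqedge e heq _ hye with ⟨pp, hpp⟩ | ⟨ll, hll⟩
          · rw [inl.injEq] at hpp; exact absurd (hpp ▸ pp.2) hy₁
          · exact absurd hll (by simp)
        · rcases hqedge e heq _ hye with ⟨pp, hpp⟩ | ⟨ll, hll⟩
          · rw [inl.injEq] at hpp; exact absurd (hpp ▸ pp.2) hy₂
          · exact absurd hll (by simp)
      have hcyc := Hexa.glue_cycle huv pex q hpexpath hqpath hdisj hedge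
      refine Hexa.no_short_cycle hΓ.2.1 hcyc ?_
      rw [Walk.length_append, Walk.length_reverse]
      have : pex.length = 4 := by simp [pex]
      omega
  -- Upper bound for |P'|
  have hub : P'.toFinset.card ≤ (k + 1) * ((s + 1) * t) := by
    have step1 : P'.toFinset.card ≤ (k + 1) * (P'.toFinset.image F).card := by
      apply Finset.card_le_mul_card_image
      intro a ha
      obtain ⟨p₀, hp₀, hFp₀⟩ := Finset.mem_image.1 ha
      have hp₀' : p₀ ∈ P' := Set.mem_toFinset.1 hp₀
      obtain ⟨hmL, -, -, -, -, -⟩ := hF p₀ hp₀'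
      rw [hFp₀] at hmL
      -- the fiber consists of points of P' on the line a.1
      have hsub : P'.toFinset.filter (fun x => F x = a) ⊆
          {x : P | x ∈ P' ∧ I x a.1}.toFinset := by
        intro x hx
        rw [Finset.mem_filter] at hx
        obtain ⟨hx1, hx2⟩ := hx
        have hx1' : x ∈ P' := Set.mem_toFinset.1 hx1
        obtain ⟨-, hIx, -, -, -, -⟩ := hF x hx1'
        rw [hx2] at hIx
        exact Set.mem_toFinset.2 ⟨hx1', hIx⟩
      have hcard : {x : P | x ∈ P' ∧ I x a.1}.toFinset.card = k + 1 := by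
        rw [← Set.ncard_eq_toFinset_card']
        have h2 : {pp : P' | I pp.1 a.1}.ncard = k + 1 := hord'.1 ⟨a.1, hmL⟩
        have heq : Subtype.val '' {pp : P' | I pp.1 a.1} = {x : P | x ∈ P' ∧ I x a.1} := by
          ext x
          constructor
          · rintro ⟨pp, hpp, rfl⟩; exact ⟨pp.2, hpp⟩
          · rintro ⟨hx1, hx2⟩; exact ⟨⟨x, hx1⟩, hx2, rfl⟩
        rw [← heq, Set.ncard_image_of_injective _ Subtype.val_injective]
        exact h2
      calc (P'.toFinset.filter (fun x => F x = a)).card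
          ≤ {x : P | x ∈ P' ∧ I x a.1}.toFinset.card := Finset.card_le_card hsub
        _ = k + 1 := hcard
    have step2 : (P'.toFinset.image F).card ≤
        {n : L | n ≠ l ∧ ∃ x, I x n ∧ I x l}.toFinset.card := by
      apply Finset.card_le_card_of_injOn Prod.snd
      · intro b hb
        obtain ⟨p₀, hp₀, hFp₀⟩ := Finset.mem_image.1 hb
        have hp₀' : p₀ ∈ P' := Set.mem_toFinset.1 hp₀
        obtain ⟨-, -, -, hnl, hxex, -⟩ := hF p₀ hp₀'
        rw [hFp₀] at hnl hxex
        exact Set.mem_toFinset.2 ⟨hnl, hxex⟩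
      · intro b₁ hb₁ b₂ hb₂ hsnd
        obtain ⟨p₁, hp₁, hFp₁⟩ := Finset.mem_image.1 hb₁
        obtain ⟨p₂, hp₂, hFp₂⟩ := Finset.mem_image.1 hb₂
        have hp₁' : p₁ ∈ P' := Set.mem_toFinset.1 hp₁
        have hp₂' : p₂ ∈ P' := Set.mem_toFinset.1 hp₂
        obtain ⟨hm1L, -, hn1L, -, -, y₁, hy₁P, hy₁m, hy₁n⟩ := hF p₁ hp₁'
        obtain ⟨hm2L, -, -, -, -, y₂, hy₂P, hy₂m, hy₂n⟩ := hF p₂ hp₂'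
        rw [hFp₁] at hm1L hn1L hy₁m hy₁n
        rw [hFp₂] at hm2L hy₂m hy₂n
        by_cases hmm : b₁.1 = b₂.1
        · exact Prod.ext hmm hsnd
        · exact absurd (far b₁.1 b₂.1 hm1L hm2L hmm y₁ y₂ hy₁P hy₂P b₁.2 hn1L
            hy₁m hy₁n hy₂m (hsnd ▸ hy₂n)) (fun h => h)
    have step3 : {n : L | n ≠ l ∧ ∃ x, I x n ∧ I x l}.toFinset.card ≤ (s + 1) * t := by
      have hsub : {n : L | n ≠ l ∧ ∃ x, I x n ∧ I x l}.toFinset ⊆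
          ({x : P | I x l}.toFinset).biUnion (fun x => ({n : L | I x n}.toFinset).erase l) := by
        intro n hn
        obtain ⟨hnl, x, hxn, hxl⟩ := Set.mem_toFinset.1 hn
        refine Finset.mem_biUnion.2 ⟨x, Set.mem_toFinset.2 hxl, ?_⟩
        exact Finset.mem_erase.2 ⟨hnl, Set.mem_toFinset.2 hxn⟩
      calc {n : L | n ≠ l ∧ ∃ x, I x n ∧ I x l}.toFinset.card
          ≤ _ := Finset.card_le_card hsub
        _ ≤ ∑ x ∈ {x : P | I x l}.toFinset, (({n : L | I x n}.toFinset).erase l).card :=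
            Finset.card_biUnion_le
        _ ≤ ∑ x ∈ {x : P | I x l}.toFinset, t := by
            apply Finset.sum_le_sum
            intro x hx
            have hxl : x ∈ {y : P | I y l} := Set.mem_toFinset.mp hx
            rw [Finset.card_erase_of_mem
              (Set.mem_toFinset.mpr (show l ∈ {n : L | I x n} from hxl))]
            have : {n : L | I x n}.toFinset.card = t + 1 := by
              rw [← Set.ncard_eq_toFinset_card']; exact hord.2 x
            omega
        _ = {x : P | I x l}.toFinset.card * t := by rw [Finset.sum_const, smul_eq_mul]
        _ = (s + 1) * t := by
            have : {x : P | I x l}.toFinset.card = s + 1 := by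
              rw [← Set.ncard_eq_toFinset_card']; exact hord.1 l
            rw [this]
    calc P'.toFinset.card ≤ (k + 1) * (P'.toFinset.image F).card := step1
      _ ≤ (k + 1) * ((s + 1) * t) := Nat.mul_le_mul_left _ (le_trans step2 step3)
  -- Lower bound for |P'|
  have hlb : (k + 1) * (1 + t * k + t * k * (t * k)) ≤ P'.toFinset.card := by
    have := Hexa.card_points_lower (J := fun (p : P') (m : L') => I p.1 m.1)
      hΓ'.2.1 hΓ'.1.nonempty hord'.1 hord'.2
    calc (k + 1) * (1 + t * k + t * k * (t * k)) ≤ Fintype.card P' := this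
      _ = P'.toFinset.card := (Set.toFinset_card P').symm
  -- final contradiction
  have hcomb : (k + 1) * (1 + t * k + t * k * (t * k)) ≤ (k + 1) * ((s + 1) * t) :=
    le_trans hlb hub
  have h2 : 1 + t * k + t * k * (t * k) ≤ (s + 1) * t := Nat.le_of_mul_le_mul_left
    (by calc (k + 1) * (1 + t * k + t * k * (t * k)) ≤ (k + 1) * ((s + 1) * t) := hcomb
          _ = (k + 1) * ((s + 1) * t) := rfl) (by omega)
  rw [← hkt] at h2
  nlinarith [h2, hk, ht, Nat.mul_le_mul_left t hk]
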